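/- Let R be a left hereditary associative unital ring and M a projective left R-module. Then for every submodule N of M, regarded as a left R-module in its own right, β(N) ⊆ ⟨E_N(0)⟩ ⊆ β_co(N). -/

import Mathlib

universe u v w

/-- The envelope of zero in a ring `R`:
`E_R(0) = {r·s : r, s ∈ R, r^k·s = 0 for some positive integer k}`. -/
def ringEnvelopeZero (R : Type u) [Ring R] : Set R :=
  {x | ∃ (r s : R) (k : ℕ), 0 < k ∧ r ^ k * s = 0 ∧ x = r * s}

/-- A two-sided ideal `P` of `R` is prime if it is proper and
`A·B ⊆ P` implies `A ⊆ P` or `B ⊆ P` for all two-sided ideals `A`, `B`. -/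
def IsPrimeTwoSidedIdeal {R : Type u} [Ring R] (P : TwoSidedIdeal R) : Prop :=
  P ≠ ⊤ ∧ ∀ A B : TwoSidedIdeal R, (∀ a ∈ A, ∀ b ∈ B, a * b ∈ P) → A ≤ P ∨ B ≤ P

/-- A two-sided ideal `P` of `R` is completely prime if it is proper and
`a·b ∈ P` implies `a ∈ P` or `b ∈ P`. -/
def IsCompletelyPrimeTwoSidedIdeal {R : Type u} [Ring R] (P : TwoSidedIdeal R) : Prop :=
  P ≠ ⊤ ∧ ∀ a b : R, a * b ∈ P → a ∈ P ∨ b ∈ P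

/-- `β(R)`: the prime radical of `R`, the intersection of all prime two-sided ideals. -/
def ringPrimeRadical (R : Type u) [Ring R] : Set R :=
  {x | ∀ P : TwoSidedIdeal R, IsPrimeTwoSidedIdeal P → x ∈ P}

/-- `β_co(R)`: the completely prime radical of `R`. -/
def ringCompletelyPrimeRadical (R : Type u) [Ring R] : Set R :=
  {x | ∀ P : TwoSidedIdeal R, IsCompletelyPrimeTwoSidedIdeal P → x ∈ P}

/-- A ring is 2-primal if its set of nilpotent elements equals its prime radical. -/
def IsTwoPrimalRing (R : Type u) [Ring R] : Prop :=
  {x : R | IsNilpotent x} = ringPrimeRadical R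

section ModuleDefs

variable {R : Type u} [Ring R] {M : Type v} [AddCommGroup M] [Module R M]

/-- The envelope `E_M(N) = {r·m : r ∈ R, m ∈ M, r^k·m ∈ N for some positive integer k}`. -/
def envelope (N : Submodule R M) : Set M :=
  {x | ∃ (r : R) (m : M) (k : ℕ), 0 < k ∧ r ^ k • m ∈ N ∧ x = r • m}

/-- `P` is a prime submodule of `M`: `P ≠ M` and for every two-sided ideal `A` of `R` and
every submodule `N` of `M`, `A·N ⊆ P` implies `N ⊆ P` or `A·M ⊆ P`. -/
def IsPrimeSubmodule (P : Submodule R M) : Prop :=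
  P ≠ ⊤ ∧ ∀ (A : TwoSidedIdeal R) (N : Submodule R M),
    (∀ a ∈ A, ∀ n ∈ N, a • n ∈ P) → N ≤ P ∨ ∀ a ∈ A, ∀ m : M, a • m ∈ P

/-- `P` is a completely prime submodule of `M`: `P ≠ M` and `r·m ∈ P` implies
`m ∈ P` or `r·M ⊆ P`. -/
def IsCompletelyPrimeSubmodule (P : Submodule R M) : Prop :=
  P ≠ ⊤ ∧ ∀ (r : R) (m : M), r • m ∈ P → m ∈ P ∨ ∀ m' : M, r • m' ∈ P

/-- `P` is a completely semiprime submodule of `M`: `P ≠ M` and `a²·m ∈ P` implies `a·m ∈ P`. -/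
def IsCompletelySemiprimeSubmodule (P : Submodule R M) : Prop :=
  P ≠ ⊤ ∧ ∀ (a : R) (m : M), (a * a) • m ∈ P → a • m ∈ P

/-- `β^s(N)`: the intersection of all prime submodules of `M` containing `N`
(`= M` if there are none). -/
def primeRadicalOf (N : Submodule R M) : Submodule R M :=
  sInf {P : Submodule R M | IsPrimeSubmodule P ∧ N ≤ P}

/-- `β_co^s(N)`: the intersection of all completely prime submodules of `M` containing `N`
(`= M` if there are none). -/
def cPrimeRadicalOf (N : Submodule R M) : Submodule R M :=
  sInf {P : Submodule R M | IsCompletelyPrimeSubmodule P ∧ N ≤ P}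

/-- An element `m` of `M` is strongly nilpotent if `m = a_1·m_1 + … + a_r·m_r` such that for
every `i` and every sequence `a_{i,1}, a_{i,2}, …` with `a_{i,1} = a_i` and
`a_{i,n+1} ∈ a_{i,n}·R·a_{i,n}`, there exists `k` with `a_{i,k}·R·m_i = 0`. -/
def IsStronglyNilpotent (R : Type u) [Ring R] {M : Type v} [AddCommGroup M] [Module R M]
    (m : M) : Prop :=
  ∃ (r : ℕ) (a : Fin r → R) (mi : Fin r → M),
    m = ∑ i, a i • mi i ∧
    ∀ (i : Fin r) (s : ℕ → R), s 0 = a i → (∀ n, ∃ t : R, s (n + 1) = s n * t * s n) →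
      ∃ k, ∀ t : R, (s k * t) • mi i = 0

/-- `N_s(M)`: the set of strongly nilpotent elements of `M`. -/
def stronglyNilpotentSet (R : Type u) [Ring R] (M : Type v) [AddCommGroup M] [Module R M] :
    Set M :=
  {m : M | IsStronglyNilpotent R m}

end ModuleDefs


section Aux

variable {R : Type u} [Ring R]

/-- The sum of two two-sided ideals, as a two-sided ideal. -/
private def tsiAdd (P A : TwoSidedIdeal R) : TwoSidedIdeal R :=
  TwoSidedIdeal.mk' {x | ∃ p ∈ P, ∃ q ∈ A, x = p + q}
    ⟨0, P.zero_mem, 0, A.zero_mem, (add_zero 0).symm⟩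
    (fun {x y} hx hy => by
      obtain ⟨p, hp, q, hq, rfl⟩ := hx
      obtain ⟨p', hp', q', hq', rfl⟩ := hy
      exact ⟨p + p', P.add_mem hp hp', q + q', A.add_mem hq hq', by abel⟩)
    (fun {x} hx => by
      obtain ⟨p, hp, q, hq, rfl⟩ := hx
      exact ⟨-p, P.neg_mem hp, -q, A.neg_mem hq, by abel⟩)
    (fun {x y} hy => by
      obtain ⟨p, hp, q, hq, rfl⟩ := hy
      exact ⟨x * p, P.mul_mem_left _ _ hp, x * q, A.mul_mem_left _ _ hq, mul_add x p q⟩)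
    (fun {x y} hx => by
      obtain ⟨p, hp, q, hq, rfl⟩ := hx
      exact ⟨p * y, P.mul_mem_right _ _ hp, q * y, A.mul_mem_right _ _ hq, add_mul p q y⟩)

private lemma mem_tsiAdd {P A : TwoSidedIdeal R} {x : R} :
    x ∈ tsiAdd P A ↔ ∃ p ∈ P, ∃ q ∈ A, x = p + q := by
  unfold tsiAdd
  rw [TwoSidedIdeal.mem_mk']
  rfl

/-- An element lying in every prime two-sided ideal is nilpotent. -/
private lemma nilpotent_of_mem_all_primes (a : R)
    (h : ∀ P : TwoSidedIdeal R, IsPrimeTwoSidedIdeal P → a ∈ P) : IsNilpotent a := by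
  by_contra hnil
  have hpow : ∀ n : ℕ, 0 < n → a ^ n ≠ 0 := by
    intro n hn hzero
    exact hnil ⟨n, hzero⟩
  -- Zorn's lemma on the family of (carriers of) two-sided ideals avoiding all positive powers
  set S : Set (Set R) :=
    {s | ∃ I : TwoSidedIdeal R, (I : Set R) = s ∧ ∀ n : ℕ, a ^ (n + 1) ∉ I} with hS
  have hbot : (↑(⊥ : TwoSidedIdeal R) : Set R) ∈ S := by
    refine ⟨⊥, rfl, fun n hn => ?_⟩
    rw [TwoSidedIdeal.mem_bot] at hn
    exact hpow (n + 1) (Nat.succ_pos n) hn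
  have chainUB : ∀ c ⊆ S, IsChain (· ⊆ ·) c → c.Nonempty → ∃ ub ∈ S, ∀ s ∈ c, s ⊆ ub := by
    intro c hcS hchain hcne
    obtain ⟨s₀, hs₀⟩ := hcne
    obtain ⟨I₀, hI₀, hI₀cond⟩ := hcS hs₀
    refine ⟨⋃₀ c, ⟨TwoSidedIdeal.mk' (⋃₀ c)
      ⟨s₀, hs₀, by rw [← hI₀]; exact I₀.zero_mem⟩
      (fun {x y} hx hy => ?add) (fun {x} hx => ?neg)
      (fun {x y} hy => ?ml) (fun {x y} hx => ?mr), TwoSidedIdeal.coe_mk' _ _ _ _ _ _,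
      fun n hn => ?cond⟩, fun s hs => Set.subset_sUnion_of_mem hs⟩
    case add =>
      obtain ⟨s, hsc, hxs⟩ := hx
      obtain ⟨t, htc, hyt⟩ := hy
      obtain ⟨I, hI, -⟩ := hcS hsc
      obtain ⟨J, hJ, -⟩ := hcS htc
      rcases hchain.total hsc htc with hst | hts
      · refine ⟨t, htc, ?_⟩
        rw [← hJ] at hst hyt ⊢
        exact J.add_mem (hst hxs) hyt
      · refine ⟨s, hsc, ?_⟩
        rw [← hI] at hts hxs ⊢
        exact I.add_mem hxs (hts hyt)
    case neg =>
      obtain ⟨s, hsc, hxs⟩ := hx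
      obtain ⟨I, hI, -⟩ := hcS hsc
      refine ⟨s, hsc, ?_⟩
      rw [← hI] at hxs ⊢
      exact I.neg_mem hxs
    case ml =>
      obtain ⟨s, hsc, hys⟩ := hy
      obtain ⟨I, hI, -⟩ := hcS hsc
      refine ⟨s, hsc, ?_⟩
      rw [← hI] at hys ⊢
      exact I.mul_mem_left _ _ hys
    case mr =>
      obtain ⟨s, hsc, hxs⟩ := hx
      obtain ⟨I, hI, -⟩ := hcS hsc
      refine ⟨s, hsc, ?_⟩
      rw [← hI] at hxs ⊢
      exact I.mul_mem_right _ _ hxs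
    case cond =>
      replace hn := (TwoSidedIdeal.mem_mk' _ _ _ _ _ _ _).mp hn
      obtain ⟨s, hsc, hxs⟩ := hn
      obtain ⟨I, hI, hIcond⟩ := hcS hsc
      rw [← hI] at hxs
      exact hIcond n hxs
  obtain ⟨m, -, hmax⟩ := zorn_subset_nonempty S chainUB _ hbot
  obtain ⟨P, hPm, hPcond⟩ := hmax.1
  -- P is a prime two-sided ideal
  have hPprime : IsPrimeTwoSidedIdeal P := by
    constructor
    · intro htop
      exact hPcond 0 (htop ▸ trivial)
    · intro A B hAB
      by_contra hcon
      push_neg at hcon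
      obtain ⟨hA, hB⟩ := hcon
      -- get powers of a in P + A and P + B
      have hbig : ∀ C : TwoSidedIdeal R, ¬ C ≤ P → ∃ n : ℕ, a ^ (n + 1) ∈ tsiAdd P C := by
        intro C hC
        by_contra hno
        push_neg at hno
        have hmem : (↑(tsiAdd P C) : Set R) ∈ S := ⟨tsiAdd P C, rfl, hno⟩
        have hsub : m ⊆ ↑(tsiAdd P C) := by
          rw [← hPm]
          intro x hx
          rw [SetLike.mem_coe] at hx ⊢
          exact mem_tsiAdd.mpr ⟨x, hx, 0, C.zero_mem, (add_zero x).symm⟩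
        have := hmax.2 hmem hsub
        apply hC
        intro x hx
        have hx' : x ∈ (↑(tsiAdd P C) : Set R) :=
          SetLike.mem_coe.mpr (mem_tsiAdd.mpr ⟨0, P.zero_mem, x, hx, (zero_add x).symm⟩)
        have : x ∈ m := this hx'
        rw [← hPm] at this
        exact this
      obtain ⟨n, hnA⟩ := hbig A hA
      obtain ⟨k, hkB⟩ := hbig B hB
      obtain ⟨p, hp, α, hα, hpa⟩ := mem_tsiAdd.mp hnA
      obtain ⟨q, hq, β, hβ, hqb⟩ := mem_tsiAdd.mp hkB
      apply hPcond (n + k + 1)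
      have : a ^ (n + k + 1 + 1) = a ^ (n + 1) * a ^ (k + 1) := by
        rw [← pow_add]
        congr 1
        omega
      rw [this, hpa, hqb]
      have expand : (p + α) * (q + β) = p * q + p * β + α * q + α * β := by
        rw [add_mul, mul_add, mul_add]
        abel
      rw [expand]
      exact P.add_mem (P.add_mem (P.add_mem (P.mul_mem_right _ _ hp)
        (P.mul_mem_right _ _ hp)) (P.mul_mem_left _ _ hq)) (hAB α hα β hβ)
  exact hPcond 0 (by simpa using h P hPprime)

variable {X : Type v} [AddCommGroup X] [Module R X]

/-- Images of the prime radical under linear functionals land in every prime two-sided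
ideal. -/
private lemma functional_primeRadical (g : X →ₗ[R] R) (P : TwoSidedIdeal R)
    (hP : IsPrimeTwoSidedIdeal P) {x : X} (hx : x ∈ primeRadicalOf (⊥ : Submodule R X)) :
    g x ∈ P := by
  classical
  set Q : Submodule R X :=
    { carrier := {n | g n ∈ P}
      add_mem' := fun {n₁ n₂} h1 h2 => by
        simp only [Set.mem_setOf_eq, map_add] at *
        exact P.add_mem h1 h2
      zero_mem' := by simp only [Set.mem_setOf_eq, map_zero]; exact P.zero_mem
      smul_mem' := fun r n hn => by
        simp only [Set.mem_setOf_eq, map_smul, smul_eq_mul] at *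
        exact P.mul_mem_left _ _ hn } with hQ
  by_cases htop : Q = ⊤
  · have : x ∈ Q := htop ▸ trivial
    exact this
  · -- Q is a prime submodule
    have hQprime : IsPrimeSubmodule Q := by
      refine ⟨htop, fun A K hAK => ?_⟩
      -- B := {b | ∀ a ∈ A, a * b ∈ P} is a two-sided ideal
      set B : TwoSidedIdeal R := TwoSidedIdeal.mk' {b | ∀ a ∈ A, a * b ∈ P}
        (fun a _ => by rw [mul_zero]; exact P.zero_mem)
        (fun {b₁ b₂} h1 h2 a ha => by rw [mul_add]; exact P.add_mem (h1 a ha) (h2 a ha))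
        (fun {b} hb a ha => by rw [mul_neg]; exact P.neg_mem (hb a ha))
        (fun {r b} hb a ha => by
          rw [← mul_assoc]; exact hb (a * r) (A.mul_mem_right _ _ ha))
        (fun {b r} hb a ha => by rw [← mul_assoc]; exact P.mul_mem_right _ _ (hb a ha))
        with hB
      have hmemB : ∀ b : R, b ∈ B ↔ ∀ a ∈ A, a * b ∈ P := fun b =>
        TwoSidedIdeal.mem_mk' _ _ _ _ _ _ b
      have hKB : ∀ k ∈ K, g k ∈ B := by
        intro k hk
        rw [hmemB]
        intro a ha
        have := hAK a ha k hk
        have hgk : g (a • k) ∈ P := this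
        rwa [map_smul, smul_eq_mul] at hgk
      rcases hP.2 A B (fun a ha b hb => (hmemB b).mp hb a ha) with hAP | hBP
      · right
        intro a ha m'
        have : g (a • m') ∈ P := by
          rw [map_smul, smul_eq_mul]
          exact P.mul_mem_right _ _ (hAP ha)
        exact this
      · left
        intro k hk
        exact hBP (hKB k hk)
    have hQin : Q ∈ {P : Submodule R X | IsPrimeSubmodule P ∧ (⊥ : Submodule R X) ≤ P} :=
      ⟨hQprime, bot_le⟩
    exact (Submodule.mem_sInf.mp hx) Q hQin

/-- Descending powers through a completely prime submodule. -/
private lemma cprime_descend (P : Submodule R X) (hP : IsCompletelyPrimeSubmodule P)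
    (r : R) : ∀ k : ℕ, 0 < k → ∀ m : X, r ^ k • m ∈ P → r • m ∈ P := by
  intro k
  induction k with
  | zero => intro h; exact absurd h (lt_irrefl 0)
  | succ k ih =>
    intro _ m hm
    rcases Nat.eq_zero_or_pos k with hk0 | hkpos
    · subst hk0
      rwa [pow_one] at hm
    · rw [pow_succ', mul_smul] at hm
      rcases hP.2 r (r ^ k • m) hm with h1 | h2
      · exact ih hkpos m h1
      · exact h2 m

end Aux

/-- if `R` is left hereditary and `M` is a projective left `R`-module, then
for every submodule `N` of `M` (regarded as an `R`-module), `β(N) ⊆ ⟨E_N(0)⟩ ⊆ β_co(N)`. -/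
theorem stmt14 {R : Type u} [Ring R]
    (hher : ∀ (X : Type v) [AddCommGroup X] [Module R X], Module.Projective R X →
      ∀ N : Submodule R X, Module.Projective R N)
    {M : Type v} [AddCommGroup M] [Module R M] (hM : Module.Projective R M)
    (N : Submodule R M) :
    primeRadicalOf (⊥ : Submodule R N) ≤
      Submodule.span R (envelope (⊥ : Submodule R N)) ∧
    Submodule.span R (envelope (⊥ : Submodule R N)) ≤
      cPrimeRadicalOf (⊥ : Submodule R N) := by
  classical
  constructor
  · -- β(N) ⊆ ⟨E_N(0)⟩
    have hN : Module.Projective R N := hher M hM N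
    obtain ⟨s, hs⟩ := Module.projective_def.mp hN
    intro x hx
    have hcoord : ∀ i : N, IsNilpotent (s x i) := by
      intro i
      apply nilpotent_of_mem_all_primes
      intro P hP
      exact functional_primeRadical ((Finsupp.lapply i).comp s) P hP hx
    have hxeq : x = (s x).sum fun i a => a • i := by
      conv_lhs => rw [← hs x]
      rw [Finsupp.linearCombination_apply]
      rfl
    rw [hxeq]
    apply Submodule.sum_mem
    intro i hi
    apply Submodule.subset_span
    obtain ⟨k, hk⟩ := hcoord i
    refine ⟨s x i, i, k + 1, Nat.succ_pos k, ?_, rfl⟩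
    rw [Submodule.mem_bot, pow_succ, hk, zero_mul, zero_smul]
  · -- ⟨E_N(0)⟩ ⊆ β_co(N)
    apply le_sInf
    rintro P ⟨hP, -⟩
    rw [Submodule.span_le]
    rintro z ⟨r, m, k, hk, hmem, rfl⟩
    rw [Submodule.mem_bot] at hmem
    exact cprime_descend P hP r k hk m (hmem ▸ P.zero_mem)
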